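/- Let p be an odd prime and q = p^e with e ≥ 1, and let 1 ≤ k ≤ q-1 with gcd(k, q-1) = 1 and k' the inverse of k mod q-1. Then A_k is a permutation polynomial of F_q if and only if gcd(k, q-1) = 1 and both of the following hold: (i) for all 1 ≤ s ≤ (q-1)/2, Σ_{2 ≤ i ≤ q-2} (-1)^i · C((k'·s)*, (k'·i)*) · C(i, 2s) ≡ 0 (mod p); (ii) for all 1 ≤ s < (q-1)/2, Σ_{2 ≤ i ≤ q-2} (-1)^i · C((k'·(s+(q-1)/2))*, (k'·i)*) · C(i, 2s) ≡ 0 (mod p). -/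

import Mathlib

/-- For `a > 0`, the representative of `a` modulo `q - 1` in `{1, ..., q-1}`; `star q 0 = 0`. -/
def star (q a : ℕ) : ℕ :=
  if a = 0 then 0 else if a % (q - 1) = 0 then q - 1 else a % (q - 1)

section StarBasic

lemma star_modEq (q a : ℕ) : _root_.star q a ≡ a [MOD q - 1] := by
  unfold _root_.star
  split_ifs with h1 h2
  · subst h1; rfl
  · show (q-1) % (q-1) = a % (q-1)
    simp [Nat.mod_self, h2]
  · show (a % (q-1)) % (q-1) = a % (q-1)
    exact Nat.mod_mod_of_dvd a dvd_rfl

lemma star_pos {q a : ℕ} (hq : 2 ≤ q) (ha : a ≠ 0) : 1 ≤ _root_.star q a := by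
  unfold _root_.star
  split_ifs with h1 h2
  · exact absurd h1 ha
  · omega
  · omega

lemma star_le {q : ℕ} (hq : 2 ≤ q) (a : ℕ) : _root_.star q a ≤ q - 1 := by
  unfold _root_.star
  have : a % (q-1) < q - 1 := Nat.mod_lt _ (by omega)
  split_ifs <;> omega

lemma star_lt {q a : ℕ} (hq : 2 ≤ q) (ha : ¬ (q - 1) ∣ a) : _root_.star q a ≤ q - 2 := by
  have h0 : a ≠ 0 := by rintro rfl; exact ha (dvd_zero _)
  have h2 : a % (q-1) ≠ 0 := fun h => ha (Nat.dvd_of_mod_eq_zero h)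
  unfold _root_.star
  have : a % (q-1) < q - 1 := Nat.mod_lt _ (by omega)
  split_ifs <;> omega

lemma star_eq_self {q a : ℕ} (ha1 : 1 ≤ a) (ha2 : a ≤ q - 1) : _root_.star q a = a := by
  unfold _root_.star
  have hq : 2 ≤ q := by omega
  rcases eq_or_lt_of_le ha2 with h | h
  · rw [if_neg (by omega), if_pos (by rw [h, Nat.mod_self]), h]
  · rw [if_neg (by omega), if_neg (by rw [Nat.mod_eq_of_lt h]; omega), Nat.mod_eq_of_lt h]

lemma star_zero_iff {q a : ℕ} : _root_.star q a = 0 ↔ a = 0 := by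
  unfold _root_.star
  split_ifs with h1 h2
  · simp [h1]
  · constructor
    · intro h; rw [h] at h2; simpa using h2
    · intro h; exact absurd h h1
  · constructor
    · intro h; exact absurd h h2
    · intro h; exact absurd h h1

lemma star_congr {q a b : ℕ} (hab : a ≡ b [MOD q - 1]) (ha : a ≠ 0) (hb : b ≠ 0) :
    _root_.star q a = _root_.star q b := by
  unfold _root_.star
  rw [if_neg ha, if_neg hb]
  unfold Nat.ModEq at hab
  rw [hab]

end StarBasic

section Field1

variable {F : Type*} [Field F] [Fintype F]

lemma pow_mod_reduce {x : F} {n : ℕ} (hx : x ^ n = 1) (m : ℕ) : x ^ m = x ^ (m % n) := by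
  conv_lhs => rw [← Nat.mod_add_div m n, pow_add, pow_mul, hx, one_pow, mul_one]

lemma pow_star {q : ℕ} (hF : Fintype.card F = q) (x : F) (a : ℕ) :
    x ^ a = x ^ _root_.star q a := by
  have hq : 2 ≤ q := hF ▸ Fintype.one_lt_card
  rcases eq_or_ne a 0 with rfl | ha
  · rw [star_zero_iff.2 rfl]
  rcases eq_or_ne x 0 with rfl | hx
  · rw [zero_pow ha, zero_pow (by simpa [Ne, star_zero_iff] using ha)]
  have h1 : x ^ (q - 1) = 1 := hF ▸ FiniteField.pow_card_sub_one_eq_one x hx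
  rw [pow_mod_reduce h1 a, pow_mod_reduce h1 (_root_.star q a), star_modEq q a]

lemma sum_pow_eq {q : ℕ} (hF : Fintype.card F = q) {m : ℕ} (hm : 1 ≤ m) :
    ∑ x : F, x ^ m = if (q - 1) ∣ m then (-1 : F) else 0 := by
  classical
  have hq : 2 ≤ q := hF ▸ Fintype.one_lt_card
  split_ifs with hd
  · have hs : _root_.star q m = q - 1 := by
      unfold _root_.star
      rw [if_neg (by omega), if_pos (Nat.eq_zero_of_dvd_of_lt (dvd_refl 0) |> fun _ => Nat.mod_eq_zero_of_dvd hd)]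
    have hone : ∀ x : F, x ≠ 0 → x ^ m = 1 := by
      intro x hx
      have h1 := FiniteField.pow_card_sub_one_eq_one x hx
      rw [hF] at h1
      rw [pow_star hF x m, hs]
      exact h1
    have : ∀ x : F, x ^ m = if x = 0 then 0 else 1 := by
      intro x
      split_ifs with h
      · subst h; exact zero_pow (by omega)
      · exact hone x h
    simp only [this]
    rw [Finset.sum_ite, Finset.sum_const, Finset.sum_const, smul_zero, zero_add, nsmul_eq_mul,
      mul_one]
    have hcard : (Finset.univ.filter (fun x : F => ¬ x = 0)).card = q - 1 := by
      have h1 : (Finset.univ.filter (fun x : F => x = 0)) = {0} := by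
        ext x; simp
      rw [Finset.filter_not, Finset.card_sdiff_of_subset (Finset.filter_subset _ _), Finset.card_univ,
        hF, h1, Finset.card_singleton]
    rw [hcard]
    have : ((q - 1 : ℕ) : F) = (q : F) - 1 := by
      have : (1:ℕ) ≤ q := by omega
      push_cast [Nat.cast_sub this]; ring
    rw [this, ← hF, Nat.cast_card_eq_zero, zero_sub]
  · have hs : _root_.star q m ≤ q - 2 := star_lt hq hd
    have := FiniteField.sum_pow_lt_card_sub_one F (_root_.star q m) (by rw [hF]; omega)
    calc ∑ x : F, x ^ m = ∑ x : F, x ^ _root_.star q m := by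
          exact Finset.sum_congr rfl fun x _ => pow_star hF x m
      _ = 0 := this

end Field1

section Crit

variable {F : Type*} [Field F] [Fintype F]

lemma bijective_iff_powsums {q : ℕ} (hF : Fintype.card F = q) (hq : 3 ≤ q) (f : F → F) :
    Function.Bijective f ↔
      ((∀ t, 1 ≤ t → t ≤ q - 2 → ∑ x : F, f x ^ t = 0) ∧
        ∑ x : F, f x ^ (q - 1) = -1) := by
  constructor
  · intro hb
    constructor
    · intro t ht1 ht2
      rw [Function.Bijective.sum_comp hb (fun y => y ^ t), sum_pow_eq hF ht1,
        if_neg (fun hdvd => by have := Nat.le_of_dvd (by omega) hdvd; omega)]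
    · rw [Function.Bijective.sum_comp hb (fun y => y ^ (q - 1)),
        sum_pow_eq hF (by omega : 1 ≤ q - 1), if_pos dvd_rfl]
  · rintro ⟨h1, h2⟩
    rw [← Finite.surjective_iff_bijective]
    intro a
    by_contra hno
    push_neg at hno
    have hB : ∑ x : F, (f x - a) ^ (q - 1) = -1 := by
      have expand : ∀ x : F, (f x - a) ^ (q - 1) =
          ∑ j ∈ Finset.range q, f x ^ j * ((-a) ^ (q - 1 - j) * ((q - 1).choose j : F)) := by
        intro x
        rw [sub_eq_add_neg, add_pow]
        rw [show q - 1 + 1 = q by omega]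
        exact Finset.sum_congr rfl fun j _ => by ring
      calc ∑ x : F, (f x - a) ^ (q - 1)
          = ∑ x : F, ∑ j ∈ Finset.range q, f x ^ j * ((-a) ^ (q - 1 - j) * ((q - 1).choose j : F)) :=
            Finset.sum_congr rfl fun x _ => expand x
        _ = ∑ j ∈ Finset.range q, ∑ x : F, f x ^ j * ((-a) ^ (q - 1 - j) * ((q - 1).choose j : F)) :=
            Finset.sum_comm
        _ = ∑ j ∈ Finset.range q, (∑ x : F, f x ^ j) * ((-a) ^ (q - 1 - j) * ((q - 1).choose j : F)) :=
            Finset.sum_congr rfl fun j _ => by rw [Finset.sum_mul]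
        _ = ∑ j ∈ Finset.range q, (if j = q - 1 then (-1 : F) else 0) := by
            refine Finset.sum_congr rfl fun j hj => ?_
            rw [Finset.mem_range] at hj
            split_ifs with hje
            · subst hje
              rw [h2, Nat.sub_self, pow_zero, Nat.choose_self, Nat.cast_one, one_mul,
                mul_one]
            · rcases Nat.eq_zero_or_pos j with rfl | hjpos
              · have : ∑ x : F, f x ^ 0 = 0 := by
                  simp only [pow_zero, Finset.sum_const, Finset.card_univ, nsmul_eq_mul, mul_one]
                  exact Nat.cast_card_eq_zero F
                rw [this, zero_mul]
              · rw [h1 j hjpos (by omega), zero_mul]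
        _ = -1 := by
            rw [Finset.sum_ite_eq' (Finset.range q) (q - 1) (fun _ => (-1 : F))]
            rw [if_pos (Finset.mem_range.mpr (by omega))]
    have hA : ∑ x : F, (f x - a) ^ (q - 1) = 0 := by
      have : ∀ x : F, (f x - a) ^ (q - 1) = 1 := by
        intro x
        have hne : f x - a ≠ 0 := sub_ne_zero.mpr (hno x)
        have h1' := FiniteField.pow_card_sub_one_eq_one (f x - a) hne
        rw [hF] at h1'
        exact h1'
      simp only [this, Finset.sum_const, Finset.card_univ, nsmul_eq_mul, mul_one]
      exact Nat.cast_card_eq_zero F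
    rw [hA] at hB
    exact one_ne_zero (neg_injective (by simpa using hB.symm) : (1 : F) = 0)

end Crit

section Helpers

lemma mod_char {n x : ℕ} (hn : 0 < n) (hx : x < 2 * n) :
    x % n = if x < n then x else x - n := by
  split_ifs with h
  · exact Nat.mod_eq_of_lt h
  · rw [Nat.mod_eq_sub_mod (by omega), Nat.mod_eq_of_lt (by omega)]

lemma dvd_add_iff_eq_rho {n D c : ℕ} (hn : 0 < n) (hc : c < n) :
    n ∣ D + c ↔ c = (n - D % n) % n := by
  have hd : D % n < n := Nat.mod_lt _ hn
  have h1 : (D + c) % n = (D % n + c) % n := by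
    rw [Nat.add_mod D c n, Nat.mod_eq_of_lt hc]
  rw [Nat.dvd_iff_mod_eq_zero, h1, mod_char (x := D % n + c) hn (by omega),
    mod_char (x := n - D % n) hn (by omega)]
  split_ifs <;> omega

lemma rho_add_modEq {n : ℕ} (hn : 0 < n) (D : ℕ) :
    (n - D % n) % n + D ≡ 0 [MOD n] := by
  have hd : D % n < n := Nat.mod_lt _ hn
  calc (n - D % n) % n + D ≡ (n - D % n) + D % n [MOD n] :=
        Nat.ModEq.add (Nat.mod_modEq _ n) (Nat.mod_modEq D n).symm
    _ = n := by omega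
    _ ≡ 0 [MOD n] := Nat.modEq_zero_iff_dvd.mpr dvd_rfl

lemma choose_rho {n i ρ τ : ℕ} (hn : 0 < n) (hi : i < n) (hρ : ρ < n)
    (hτ1 : 1 ≤ τ) (hτ2 : τ ≤ n - 1) (hcong : (ρ + τ) % n = i % n) :
    i.choose ρ = i.choose τ := by
  rw [Nat.mod_eq_of_lt hi, mod_char hn (by omega)] at hcong
  rcases le_or_gt τ i with h | h
  · have hρi : ρ = i - τ := by split_ifs at hcong <;> omega
    rw [hρi, Nat.choose_symm h]
  · have hρi : ρ = i + n - τ := by split_ifs at hcong <;> omega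
    rw [Nat.choose_eq_zero_of_lt (show i < ρ by omega), Nat.choose_eq_zero_of_lt h]

variable {F : Type*} [Field F]

lemma neg_one_pow_congr' {a b : ℕ} (h : a % 2 = b % 2) : (-1 : F) ^ a = (-1 : F) ^ b := by
  rcases Nat.even_or_odd a with ha | ha
  · have hb : Even b := by rw [Nat.even_iff] at *; omega
    rw [ha.neg_one_pow, hb.neg_one_pow]
  · have hb : Odd b := by rw [Nat.odd_iff] at *; omega
    rw [ha.neg_one_pow, hb.neg_one_pow]

lemma sign_split {M j : ℕ} (h : j ≤ M) : (-1 : F) ^ (M - j) = (-1) ^ M * (-1) ^ j := by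
  have h1 : (-1 : F) ^ (M + j) = (-1) ^ (M - j) := by
    rw [show M + j = M - j + 2 * j by omega, pow_add, pow_mul, neg_one_sq, one_pow, mul_one]
  rw [← h1, pow_add]

end Helpers

section Ident

variable {F : Type*} [Field F] [Fintype F]

lemma ident {q : ℕ} (hF : Fintype.card F = q) (hq : 3 ≤ q) (hneven : 2 ∣ (q - 1))
    {k k' : ℕ} (hk1 : 1 ≤ k) (hcopk : Nat.Coprime k (q - 1)) (hk'1 : 1 ≤ k')
    (hcopk' : Nat.Coprime k' (q - 1))
    (hk'k : (k' * k) % (q - 1) = 1) (hkk' : (k * k') % (q - 1) = 1)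
    {M : ℕ} (hM1 : 1 ≤ M) (hM2 : M ≤ q - 2) :
    ∑ x : F, (x ^ k * ((x + 1) ^ k - x ^ k)) ^ M =
      (-1 : F) ^ (M + 1) *
        ∑ i ∈ Finset.Icc 2 (q - 2), (-1 : F) ^ i *
          (M.choose (_root_.star q (k' * i)) : F) *
          ((i.choose (_root_.star q (2 * _root_.star q (k * M)))) : F) := by
  classical
  set n := q - 1 with hn
  have hn2 : 2 ≤ n := by omega
  have hn0 : 0 < n := by omega
  -- power facts
  have hstar_kk' : _root_.star q (k * k') = 1 := by
    unfold _root_.star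
    rw [if_neg (by positivity), ← hn, hkk', if_neg (by omega)]
  have hstar_k'k : _root_.star q (k' * k) = 1 := by
    unfold _root_.star
    rw [if_neg (by positivity), ← hn, hk'k, if_neg (by omega)]
  have hpow_kk' : ∀ x : F, (x ^ k) ^ k' = x := fun x => by
    rw [← pow_mul, pow_star hF x (k * k'), hstar_kk', pow_one]
  have hpow_k'k : ∀ x : F, (x ^ k') ^ k = x := fun x => by
    rw [← pow_mul, pow_star hF x (k' * k), hstar_k'k, pow_one]
  have hbij_k : Function.Bijective (fun x : F => x ^ k) :=
    Finite.injective_iff_bijective.mp (fun x y hxy => by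
      have := congrArg (fun z : F => z ^ k') hxy
      simpa [hpow_kk'] using this)
  have hbij_k' : Function.Bijective (fun x : F => x ^ k') :=
    Finite.injective_iff_bijective.mp (fun x y hxy => by
      have := congrArg (fun z : F => z ^ k) hxy
      simpa [hpow_k'k] using this)
  have hk'odd : k' % 2 = 1 := by
    have h2 : ¬ (2 ∣ k') := fun h => by
      have hd := Nat.dvd_gcd h hneven
      rw [Nat.Coprime.gcd_eq_one hcopk'] at hd
      exact absurd (Nat.le_of_dvd one_pos hd) (by omega)
    omega
  have hkodd : k % 2 = 1 := by
    have h2 : ¬ (2 ∣ k) := fun h => by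
      have hd := Nat.dvd_gcd h hneven
      rw [Nat.Coprime.gcd_eq_one hcopk] at hd
      exact absurd (Nat.le_of_dvd one_pos hd) (by omega)
    omega
  set t := _root_.star q (k * M) with ht
  set τ := _root_.star q (2 * t) with hτdef
  have htpos : 1 ≤ t := star_pos (by omega) (by positivity)
  have htle : t ≤ n := by rw [ht, hn]; exact star_le (by omega) _
  have hτpos : 1 ≤ τ := star_pos (by omega) (by omega)
  have hτle : τ ≤ n := by rw [hτdef, hn]; exact star_le (by omega) _
  have hτeven : τ % 2 = 0 := by
    have h2 := (star_modEq q (2 * t)).of_dvd (hn ▸ hneven)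
    unfold Nat.ModEq at h2
    omega
  have hτmod : τ ≡ 2 * (k * M) [MOD n] :=
    (hn ▸ star_modEq q (2 * t)).trans ((hn ▸ star_modEq q (k * M)).mul_left 2)
  -- Step 1-3: expand the sum
  have step1 : ∑ x : F, (x ^ k * ((x + 1) ^ k - x ^ k)) ^ M =
      ∑ j ∈ Finset.range (M + 1), (M.choose j : F) * (-1) ^ (M - j) *
        ∑ y : F, y ^ (2 * M - j) * (y ^ k' + 1) ^ (k * j) := by
    rw [← Function.Bijective.sum_comp hbij_k'
      (fun z => (z ^ k * ((z + 1) ^ k - z ^ k)) ^ M)]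
    have hptw : ∀ y : F, ((y ^ k') ^ k * ((y ^ k' + 1) ^ k - (y ^ k') ^ k)) ^ M =
        ∑ j ∈ Finset.range (M + 1), (M.choose j : F) * (-1) ^ (M - j) *
          (y ^ (2 * M - j) * (y ^ k' + 1) ^ (k * j)) := by
      intro y
      rw [hpow_k'k y, mul_pow, sub_eq_add_neg, add_pow, Finset.mul_sum]
      refine Finset.sum_congr rfl fun j hj => ?_
      rw [Finset.mem_range] at hj
      rw [← pow_mul, neg_pow]
      rw [show y ^ M * ((y ^ k' + 1) ^ (k * j) * ((-1 : F) ^ (M - j) * y ^ (M - j)) *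
            (M.choose j : F)) =
          (M.choose j : F) * (-1) ^ (M - j) *
            ((y ^ M * y ^ (M - j)) * (y ^ k' + 1) ^ (k * j)) by ring,
        ← pow_add, show M + (M - j) = 2 * M - j by omega]
    calc ∑ y : F, ((y ^ k') ^ k * ((y ^ k' + 1) ^ k - (y ^ k') ^ k)) ^ M
        = ∑ y : F, ∑ j ∈ Finset.range (M + 1), (M.choose j : F) * (-1) ^ (M - j) *
            (y ^ (2 * M - j) * (y ^ k' + 1) ^ (k * j)) :=
          Finset.sum_congr rfl fun y _ => hptw y
      _ = ∑ j ∈ Finset.range (M + 1), (M.choose j : F) * (-1) ^ (M - j) *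
            ∑ y : F, y ^ (2 * M - j) * (y ^ k' + 1) ^ (k * j) := by
          rw [Finset.sum_comm]
          exact Finset.sum_congr rfl fun j _ => by rw [Finset.mul_sum]
  -- Step 5: inner sums
  have hstar_kj_lt : ∀ j, 1 ≤ j → j ≤ M → _root_.star q (k * j) < n := by
    intro j hj1 hj2
    have hnd : ¬ (n ∣ k * j) := by
      intro hdvd
      have := (Nat.Coprime.dvd_of_dvd_mul_left (Nat.coprime_comm.mp hcopk) hdvd)
      exact absurd (Nat.le_of_dvd (by omega) this) (by omega)
    have := star_lt (q := q) (by omega) (hn ▸ hnd)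
    omega
  have hstar_lt : ∀ j ≤ M, _root_.star q (k * j) < n := by
    intro j hj
    rcases Nat.eq_zero_or_pos j with rfl | hj1
    · rw [mul_zero, star_zero_iff.mpr rfl]; omega
    · exact hstar_kj_lt j hj1 hj
  have step5 : ∀ j ∈ Finset.range (M + 1),
      ∑ y : F, y ^ (2 * M - j) * (y ^ k' + 1) ^ (k * j) =
        -(((_root_.star q (k * j)).choose
            ((n - (k * (2 * M - j)) % n) % n) : F)) := by
    intro j hj
    rw [Finset.mem_range] at hj
    set i := _root_.star q (k * j) with hi
    set D := k * (2 * M - j) with hD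
    set ρ := (n - D % n) % n with hρ
    have hilt : i < n := hstar_lt j (by omega)
    have hρlt : ρ < n := Nat.mod_lt _ hn0
    have hD1 : 1 ≤ D := by
      have : 1 ≤ 2 * M - j := by omega
      exact Nat.one_le_iff_ne_zero.mpr (by positivity)
    calc ∑ y : F, y ^ (2 * M - j) * (y ^ k' + 1) ^ (k * j)
        = ∑ z : F, (z ^ k) ^ (2 * M - j) * ((z ^ k) ^ k' + 1) ^ (k * j) :=
          (Function.Bijective.sum_comp hbij_k
            (fun y => y ^ (2 * M - j) * (y ^ k' + 1) ^ (k * j))).symm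
      _ = ∑ z : F, z ^ D * (z + 1) ^ i := by
          refine Finset.sum_congr rfl fun z _ => ?_
          rw [hpow_kk' z, ← pow_mul, pow_star hF (z + 1) (k * j), ← hD, ← hi]
      _ = ∑ z : F, ∑ c ∈ Finset.range (i + 1), z ^ (D + c) * ((i.choose c : F)) := by
          refine Finset.sum_congr rfl fun z _ => ?_
          rw [add_pow, Finset.mul_sum]
          refine Finset.sum_congr rfl fun c _ => ?_
          rw [one_pow, pow_add]; ring
      _ = ∑ c ∈ Finset.range (i + 1), (∑ z : F, z ^ (D + c)) * ((i.choose c : F)) := by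
          rw [Finset.sum_comm]
          exact Finset.sum_congr rfl fun c _ => by rw [Finset.sum_mul]
      _ = ∑ c ∈ Finset.range (i + 1),
            (if c = ρ then -((i.choose c : F)) else 0) := by
          refine Finset.sum_congr rfl fun c hc => ?_
          rw [Finset.mem_range] at hc
          rw [sum_pow_eq hF (by omega : 1 ≤ D + c), ← hn]
          by_cases h : c = ρ
          · rw [if_pos ((dvd_add_iff_eq_rho hn0 (show c < n by omega)).mpr h), if_pos h,
              neg_one_mul]
          · rw [if_neg (fun hd => h ((dvd_add_iff_eq_rho hn0 (show c < n by omega)).mp hd)),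
              if_neg h, zero_mul]
      _ = -((i.choose ρ : F)) := by
          rw [Finset.sum_ite_eq' (Finset.range (i + 1)) ρ (fun c => -((i.choose c : F)))]
          split_ifs with h
          · rfl
          · rw [Finset.mem_range] at h
            rw [Nat.choose_eq_zero_of_lt (by omega), Nat.cast_zero, neg_zero]
  -- congruence: (ρ j + τ) % n = i j % n
  have hcong : ∀ j ≤ M,
      (((n - (k * (2 * M - j)) % n) % n) + τ) % n = (_root_.star q (k * j)) % n := by
    intro j hj
    set D := k * (2 * M - j) with hD
    set ρ := (n - D % n) % n with hρ
    have m1 : ρ + D ≡ 0 [MOD n] := rho_add_modEq hn0 D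
    have m2 : _root_.star q (k * j) ≡ k * j [MOD n] := hn ▸ star_modEq q (k * j)
    have hsum : k * j + D = 2 * (k * M) := by
      rw [hD, ← Nat.mul_add, show j + (2 * M - j) = 2 * M by omega]; ring
    have key : ρ + τ ≡ _root_.star q (k * j) [MOD n] := by
      apply Nat.ModEq.add_right_cancel' D
      calc ρ + τ + D = (ρ + D) + τ := by ring
        _ ≡ 0 + τ [MOD n] := m1.add_right τ
        _ = τ := by ring
        _ ≡ 2 * (k * M) [MOD n] := hτmod
        _ = k * j + D := hsum.symm
        _ ≡ _root_.star q (k * j) + D [MOD n] := m2.symm.add_right D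
    exact key
  rw [step1]
  have step15 : ∑ j ∈ Finset.range (M + 1), (M.choose j : F) * (-1) ^ (M - j) *
      ∑ y : F, y ^ (2 * M - j) * (y ^ k' + 1) ^ (k * j) =
    ∑ j ∈ Finset.range (M + 1), (M.choose j : F) * (-1) ^ (M - j) *
      -(((_root_.star q (k * j)).choose ((n - (k * (2 * M - j)) % n) % n) : F)) :=
    Finset.sum_congr rfl fun j hj => by rw [step5 j hj]
  rw [step15]
  -- branch on τ = n
  rcases eq_or_lt_of_le hτle with hτn | hτlt
  · -- τ = n : both sides vanish
    have hrhs : ∀ i ∈ Finset.Icc 2 (q - 2), (-1 : F) ^ i *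
        (M.choose (_root_.star q (k' * i)) : F) * ((i.choose τ : F)) = 0 := by
      intro i hi
      rw [Finset.mem_Icc] at hi
      rw [Nat.choose_eq_zero_of_lt (show i < τ by omega), Nat.cast_zero, mul_zero]
    rw [Finset.sum_congr rfl hrhs, Finset.sum_const, smul_zero, mul_zero]
    have hterm : ∀ j ≤ M, ((_root_.star q (k * j)).choose
        ((n - (k * (2 * M - j)) % n) % n) : F) = 1 := by
      intro j hj
      have h1 := hcong j hj
      have hilt := hstar_lt j hj
      have hρlt : ((n - (k * (2 * M - j)) % n) % n) < n := Nat.mod_lt _ hn0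
      have : ((n - (k * (2 * M - j)) % n) % n) = _root_.star q (k * j) := by
        rw [hτn] at h1
        rw [Nat.add_mod_right, Nat.mod_eq_of_lt hρlt, Nat.mod_eq_of_lt hilt] at h1
        exact h1
      rw [this, Nat.choose_self, Nat.cast_one]
    calc ∑ j ∈ Finset.range (M + 1), (M.choose j : F) * (-1) ^ (M - j) *
          -(((_root_.star q (k * j)).choose ((n - (k * (2 * M - j)) % n) % n) : F))
        = -∑ j ∈ Finset.range (M + 1), (1 : F) ^ j * (-1) ^ (M - j) * (M.choose j : F) := by
          rw [← Finset.sum_neg_distrib]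
          refine Finset.sum_congr rfl fun j hj => ?_
          rw [Finset.mem_range] at hj
          rw [hterm j (by omega)]; ring
      _ = -((1 + -1 : F) ^ M) := by rw [add_pow]
      _ = 0 := by
          rw [add_neg_cancel, zero_pow (by omega), neg_zero]
  · -- τ < n, i.e. τ ≤ n - 1
    have hτle' : τ ≤ n - 1 := by omega
    have step6 : ∀ j ∈ Finset.range (M + 1),
        (M.choose j : F) * (-1) ^ (M - j) *
          -(((_root_.star q (k * j)).choose ((n - (k * (2 * M - j)) % n) % n) : F)) =
        (-1 : F) ^ (M + 1) *
          ((-1 : F) ^ j * (M.choose j : F) * ((_root_.star q (k * j)).choose τ : F)) := by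
      intro j hj
      rw [Finset.mem_range] at hj
      have hch : (_root_.star q (k * j)).choose ((n - (k * (2 * M - j)) % n) % n) =
          (_root_.star q (k * j)).choose τ :=
        choose_rho hn0 (hstar_lt j (by omega)) (Nat.mod_lt _ hn0) hτpos hτle'
          (hcong j (by omega))
      rw [hch, sign_split (show j ≤ M by omega), pow_succ]
      ring
    rw [Finset.sum_congr rfl step6, ← Finset.mul_sum]
    congr 1
    -- extend to range n, reindex, restrict to Icc 2 (n-1)
    have hMn : M + 1 ≤ n := by omega
    rw [Finset.sum_subset (Finset.range_subset_range.mpr hMn)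
      (fun j _ hj => by
        rw [Finset.mem_range, not_lt] at hj
        rw [Nat.choose_eq_zero_of_lt (by omega), Nat.cast_zero, mul_zero, zero_mul])]
    have hreindex : ∑ j ∈ Finset.range n,
        (-1 : F) ^ j * (M.choose j : F) * ((_root_.star q (k * j)).choose τ : F) =
        ∑ i ∈ Finset.range n,
          (-1 : F) ^ i * (M.choose (_root_.star q (k' * i)) : F) * ((i.choose τ : F)) := by
      refine Finset.sum_nbij' (fun j => _root_.star q (k * j))
        (fun i => _root_.star q (k' * i)) ?_ ?_ ?_ ?_ ?_
      · intro j hj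
        simp only [Finset.mem_range] at hj ⊢
        rcases Nat.eq_zero_or_pos j with rfl | hj1
        · have h0 : _root_.star q (k * 0) = 0 := by
            rw [mul_zero]; exact star_zero_iff.mpr rfl
          omega
        · have hnd : ¬ (n ∣ k * j) := fun hdvd => by
            have := Nat.Coprime.dvd_of_dvd_mul_left (Nat.coprime_comm.mp hcopk) hdvd
            exact absurd (Nat.le_of_dvd (by omega) this) (by omega)
          have := star_lt (q := q) (by omega) (hn ▸ hnd)
          omega
      · intro i hi
        simp only [Finset.mem_range] at hi ⊢
        rcases Nat.eq_zero_or_pos i with rfl | hi1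
        · have h0 : _root_.star q (k' * 0) = 0 := by
            rw [mul_zero]; exact star_zero_iff.mpr rfl
          omega
        · have hnd : ¬ (n ∣ k' * i) := fun hdvd => by
            have := Nat.Coprime.dvd_of_dvd_mul_left (Nat.coprime_comm.mp hcopk') hdvd
            exact absurd (Nat.le_of_dvd (by omega) this) (by omega)
          have := star_lt (q := q) (by omega) (hn ▸ hnd)
          omega
      · intro j hj
        rw [Finset.mem_range] at hj
        show _root_.star q (k' * _root_.star q (k * j)) = j
        rcases Nat.eq_zero_or_pos j with rfl | hj1
        · simp only [mul_zero, star_zero_iff.mpr rfl]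
        · have h1 : k' * _root_.star q (k * j) ≡ j [MOD n] := by
            calc k' * _root_.star q (k * j) ≡ k' * (k * j) [MOD n] :=
                  (hn ▸ star_modEq q (k * j)).mul_left k'
              _ = (k' * k) * j := by ring
              _ ≡ 1 * j [MOD n] := by
                  refine Nat.ModEq.mul_right j ?_
                  show (k' * k) % n = 1 % n
                  rw [hk'k, Nat.mod_eq_of_lt (by omega)]
              _ = j := by ring
          have h2 : k' * _root_.star q (k * j) ≠ 0 := by
            have := star_pos (q := q) (by omega) (show k * j ≠ 0 by positivity)
            positivity
          rw [star_congr (hn ▸ h1) h2 (by omega), star_eq_self hj1 (by omega)]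
      · intro i hi
        rw [Finset.mem_range] at hi
        show _root_.star q (k * _root_.star q (k' * i)) = i
        rcases Nat.eq_zero_or_pos i with rfl | hi1
        · simp only [mul_zero, star_zero_iff.mpr rfl]
        · have h1 : k * _root_.star q (k' * i) ≡ i [MOD n] := by
            calc k * _root_.star q (k' * i) ≡ k * (k' * i) [MOD n] :=
                  (hn ▸ star_modEq q (k' * i)).mul_left k
              _ = (k * k') * i := by ring
              _ ≡ 1 * i [MOD n] := by
                  refine Nat.ModEq.mul_right i ?_
                  show (k * k') % n = 1 % n
                  rw [hkk', Nat.mod_eq_of_lt (by omega)]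
              _ = i := by ring
          have h2 : k * _root_.star q (k' * i) ≠ 0 := by
            have := star_pos (q := q) (by omega) (show k' * i ≠ 0 by positivity)
            positivity
          rw [star_congr (hn ▸ h1) h2 (by omega), star_eq_self hi1 (by omega)]
      · intro j hj
        rw [Finset.mem_range] at hj
        -- f j = g (σ j)
        rcases Nat.eq_zero_or_pos j with rfl | hj1
        · simp only [mul_zero, star_zero_iff.mpr rfl]
        · have h1 : k' * _root_.star q (k * j) ≡ j [MOD n] := by
            calc k' * _root_.star q (k * j) ≡ k' * (k * j) [MOD n] :=
                  (hn ▸ star_modEq q (k * j)).mul_left k'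
              _ = (k' * k) * j := by ring
              _ ≡ 1 * j [MOD n] := by
                  refine Nat.ModEq.mul_right j ?_
                  show (k' * k) % n = 1 % n
                  rw [hk'k, Nat.mod_eq_of_lt (by omega)]
              _ = j := by ring
          have h2 : k' * _root_.star q (k * j) ≠ 0 := by
            have := star_pos (q := q) (by omega) (show k * j ≠ 0 by positivity)
            positivity
          have hback : _root_.star q (k' * _root_.star q (k * j)) = j := by
            rw [star_congr (hn ▸ h1) h2 (by omega), star_eq_self hj1 (by omega)]
          simp only [hback]
          have hpar : _root_.star q (k * j) % 2 = j % 2 := by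
            have hm := (hn ▸ star_modEq q (k * j)).of_dvd (hn ▸ hneven)
            unfold Nat.ModEq at hm
            have hmm := Nat.mul_mod k j 2
            rw [hkodd, one_mul] at hmm
            omega
          rw [neg_one_pow_congr' (F := F) hpar]
    rw [hreindex]
    -- restrict to Icc 2 (n - 1)
    have hsub : Finset.Icc 2 (q - 2) ⊆ Finset.range n := by
      intro x hx
      rw [Finset.mem_Icc] at hx
      rw [Finset.mem_range]
      omega
    rw [← Finset.sum_subset hsub
      (fun i hi hni => by
        rw [Finset.mem_range] at hi
        rw [Finset.mem_Icc, not_and_or] at hni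
        have hτ2 : 2 ≤ τ := by omega
        have hi2 : i < 2 := by omega
        rw [Nat.choose_eq_zero_of_lt (show i < τ by omega), Nat.cast_zero, mul_zero])]

end Ident

section Assemble

lemma star_star_inv {q u v c : ℕ} (hq : 3 ≤ q) (hu : 1 ≤ u) (hv : 1 ≤ v)
    (huv : (v * u) % (q - 1) = 1) (hc1 : 1 ≤ c) (hc2 : c ≤ q - 2) :
    _root_.star q (v * _root_.star q (u * c)) = c := by
  have hn2 : 2 ≤ q - 1 := by omega
  have h1 : v * _root_.star q (u * c) ≡ c [MOD q - 1] := by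
    calc v * _root_.star q (u * c) ≡ v * (u * c) [MOD q - 1] :=
          (star_modEq q (u * c)).mul_left v
      _ = (v * u) * c := by ring
      _ ≡ 1 * c [MOD q - 1] := by
          refine Nat.ModEq.mul_right c ?_
          show (v * u) % (q - 1) = 1 % (q - 1)
          rw [huv, Nat.mod_eq_of_lt (by omega)]
      _ = c := by ring
  have h2 : v * _root_.star q (u * c) ≠ 0 := by
    have := star_pos (q := q) (by omega) (show u * c ≠ 0 by positivity)
    positivity
  rw [star_congr h1 h2 (by omega), star_eq_self hc1 (by omega)]

lemma star_le_sub_two {q u c : ℕ} (hq : 3 ≤ q) (hcop : Nat.Coprime u (q - 1))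
    (hc1 : 1 ≤ c) (hc2 : c ≤ q - 2) : _root_.star q (u * c) ≤ q - 2 := by
  refine star_lt (by omega) (fun hdvd => ?_)
  have := Nat.Coprime.dvd_of_dvd_mul_left (Nat.coprime_comm.mp hcop) hdvd
  exact absurd (Nat.le_of_dvd (by omega) this) (by omega)

end Assemble

theorem stmt_17 (p e k k' : ℕ) (hp : p.Prime) (hodd : Odd p) (he : 1 ≤ e)
    (hk1 : 1 ≤ k) (hk2 : k ≤ p ^ e - 1) (hgcdk : Nat.gcd k (p ^ e - 1) = 1)
    (hk'1 : 1 ≤ k') (hk'2 : k' ≤ p ^ e - 2) (hinv : k' * k ≡ 1 [MOD p ^ e - 1])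
    (F : Type*) [Field F] [Fintype F] (hF : Fintype.card F = p ^ e) :
    Function.Bijective (fun x : F => x ^ k * ((x + 1) ^ k - x ^ k)) ↔
      (Nat.gcd k (p ^ e - 1) = 1 ∧
        (∀ s, 1 ≤ s → s ≤ (p ^ e - 1) / 2 →
          (∑ i ∈ Finset.Icc 2 (p ^ e - 2),
              (-1 : ZMod p) ^ i *
                ((star (p ^ e) (k' * s)).choose (star (p ^ e) (k' * i)) : ZMod p) *
                (i.choose (2 * s) : ZMod p)) = 0) ∧
        (∀ s, 1 ≤ s → s < (p ^ e - 1) / 2 →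
          (∑ i ∈ Finset.Icc 2 (p ^ e - 2),
              (-1 : ZMod p) ^ i *
                ((star (p ^ e) (k' * (s + (p ^ e - 1) / 2))).choose
                  (star (p ^ e) (k' * i)) : ZMod p) *
                (i.choose (2 * s) : ZMod p)) = 0)) := by
  classical
  set q := p ^ e with hqdef
  have hp3 : 3 ≤ p := by
    have h2 := hp.two_le
    have : p ≠ 2 := by
      intro h
      rw [h] at hodd
      exact (Nat.not_odd_iff_even.mpr (by norm_num)) hodd
    omega
  have hq3 : 3 ≤ q := by
    calc 3 ≤ p := hp3
      _ = p ^ 1 := (pow_one p).symm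
      _ ≤ p ^ e := Nat.pow_le_pow_right (by omega) he
  have hqodd : q % 2 = 1 := Nat.odd_iff.mp (hodd.pow)
  have hneven : 2 ∣ (q - 1) := by omega
  obtain ⟨half, hhalf⟩ := hneven
  have hneven : 2 ∣ (q - 1) := ⟨half, hhalf⟩
  have hk'k : (k' * k) % (q - 1) = 1 := by
    have h := hinv
    unfold Nat.ModEq at h
    rwa [Nat.mod_eq_of_lt (show (1:ℕ) < q - 1 by omega)] at h
  have hkk' : (k * k') % (q - 1) = 1 := by rw [Nat.mul_comm k k']; exact hk'k
  have hcopk' : Nat.Coprime k' (q - 1) := by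
    have h1 : Nat.gcd k' (q - 1) ∣ k' * k := Dvd.dvd.mul_right (Nat.gcd_dvd_left _ _) k
    have h2 : (q - 1) ∣ k' * k - 1 := by
      have hd := Nat.div_add_mod (k' * k) (q - 1)
      rw [hk'k] at hd
      exact ⟨k' * k / (q - 1), by omega⟩
    have h3 : Nat.gcd k' (q - 1) ∣ k' * k - 1 := dvd_trans (Nat.gcd_dvd_right _ _) h2
    have h4 : Nat.gcd k' (q - 1) ∣ 1 := by
      have h5 := Nat.dvd_sub h1 h3
      have hk'kpos : 1 ≤ k' * k := Nat.one_le_iff_ne_zero.mpr (Nat.mul_ne_zero (by omega) (by omega))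
      rwa [Nat.sub_sub_self hk'kpos] at h5
    exact Nat.dvd_one.mp h4
  have hstar_kk' : _root_.star q (k * k') = 1 := by
    have hkk0 : k * k' ≠ 0 := Nat.mul_ne_zero (by omega) (by omega)
    unfold _root_.star
    rw [if_neg hkk0, hkk', if_neg (by omega)]
  have hpow_kk' : ∀ x : F, (x ^ k) ^ k' = x := fun x => by
    rw [← pow_mul, pow_star hF x (k * k'), hstar_kk', pow_one]
  have hAne : ∀ x : F, x ≠ 0 → x ^ k * ((x + 1) ^ k - x ^ k) ≠ 0 := by
    intro x hx
    refine mul_ne_zero (pow_ne_zero _ hx) (sub_ne_zero.mpr (fun heq => ?_))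
    have h1 := congrArg (fun z : F => z ^ k') heq
    simp only [hpow_kk'] at h1
    exact one_ne_zero (add_eq_left.mp h1)
  have hSlast : ∑ x : F, (x ^ k * ((x + 1) ^ k - x ^ k)) ^ (q - 1) = -1 := by
    have hptw : ∀ x : F, (x ^ k * ((x + 1) ^ k - x ^ k)) ^ (q - 1) = x ^ (q - 1) := by
      intro x
      rcases eq_or_ne x 0 with rfl | hx
      · rw [zero_pow (show k ≠ 0 by omega), zero_mul, zero_pow (show q - 1 ≠ 0 by omega)]
      · have h1 := FiniteField.pow_card_sub_one_eq_one _ (hAne x hx)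
        have h2 := FiniteField.pow_card_sub_one_eq_one x hx
        rw [hF] at h1 h2
        rw [h1, h2]
    rw [Finset.sum_congr rfl (fun x _ => hptw x), sum_pow_eq hF (by omega : 1 ≤ q - 1),
      if_pos dvd_rfl]
  haveI : Fact p.Prime := ⟨hp⟩
  have hp0 : (p : F) = 0 := by
    have h := Nat.cast_card_eq_zero F
    rw [hF, Nat.cast_pow] at h
    exact pow_eq_zero_iff (by omega : e ≠ 0) |>.mp h
  haveI hch : CharP F p := (CharP.charP_iff_prime_eq_zero hp).mpr hp0
  set φ := ZMod.castHom (dvd_refl p) F with hφdef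
  have hφinj : Function.Injective φ := φ.injective
  have hiff : ∀ (f g : ℕ → ℕ),
      ((∑ i ∈ Finset.Icc 2 (q - 2), (-1 : ZMod p) ^ i * (f i : ZMod p) * (g i : ZMod p)) = 0 ↔
        (∑ i ∈ Finset.Icc 2 (q - 2), (-1 : F) ^ i * (f i : F) * (g i : F)) = 0) := by
    intro f g
    have hmap : φ (∑ i ∈ Finset.Icc 2 (q - 2),
        (-1 : ZMod p) ^ i * (f i : ZMod p) * (g i : ZMod p)) =
        ∑ i ∈ Finset.Icc 2 (q - 2), (-1 : F) ^ i * (f i : F) * (g i : F) := by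
      rw [map_sum]
      exact Finset.sum_congr rfl fun i _ => by
        rw [map_mul, map_mul, map_pow, map_neg, map_one, map_natCast, map_natCast]
    rw [← hmap]
    constructor
    · intro h; rw [h, map_zero]
    · intro h; exact hφinj (by rw [h, map_zero])
  rw [bijective_iff_powsums hF hq3]
  constructor
  · rintro ⟨hS, -⟩
    refine ⟨hgcdk, ?_, ?_⟩
    · intro s hs1 hs2
      set M := _root_.star q (k' * s) with hMdef
      have hslen : s ≤ q - 2 := by omega
      have hM1 : 1 ≤ M := star_pos (by omega) (by positivity)
      have hM2 : M ≤ q - 2 := star_le_sub_two hq3 hcopk' hs1 hslen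
      have hkM : _root_.star q (k * M) = s := star_star_inv hq3 hk'1 hk1 hkk' hs1 hslen
      have h2s : _root_.star q (2 * s) = 2 * s := star_eq_self (by omega) (by omega)
      have hid := ident hF hq3 hneven hk1 hgcdk hk'1 hcopk' hk'k hkk' hM1 hM2
      rw [hkM, h2s] at hid
      have hS0 := hS M hM1 hM2
      rw [hid] at hS0
      have hunit : ((-1 : F) ^ (M + 1)) ≠ 0 := pow_ne_zero _ (by norm_num)
      have hsum0 := (mul_eq_zero.mp hS0.symm.symm).resolve_left hunit
      rw [hiff (fun i => M.choose (_root_.star q (k' * i))) (fun i => i.choose (2 * s))]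
      exact hsum0
    · intro s hs1 hs2
      set t := s + (q - 1) / 2 with htdef
      set M := _root_.star q (k' * t) with hMdef
      have ht1 : 1 ≤ t := by omega
      have ht2 : t ≤ q - 2 := by omega
      have hM1 : 1 ≤ M := star_pos (by omega) (by positivity)
      have hM2 : M ≤ q - 2 := star_le_sub_two hq3 hcopk' ht1 ht2
      have hkM : _root_.star q (k * M) = t := star_star_inv hq3 hk'1 hk1 hkk' ht1 ht2
      have h2t : _root_.star q (2 * t) = 2 * s := by
        have hcg : 2 * t ≡ 2 * s [MOD q - 1] := by
          show (2 * t) % (q - 1) = (2 * s) % (q - 1)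
          rw [show 2 * t = 2 * s + (q - 1) by omega, Nat.add_mod_right]
        rw [star_congr hcg (by positivity) (by omega), star_eq_self (by omega) (by omega)]
      have hid := ident hF hq3 hneven hk1 hgcdk hk'1 hcopk' hk'k hkk' hM1 hM2
      rw [hkM, h2t] at hid
      have hS0 := hS M hM1 hM2
      rw [hid] at hS0
      have hunit : ((-1 : F) ^ (M + 1)) ≠ 0 := pow_ne_zero _ (by norm_num)
      have hsum0 := (mul_eq_zero.mp hS0).resolve_left hunit
      rw [hiff (fun i => M.choose (_root_.star q (k' * i))) (fun i => i.choose (2 * s))]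
      exact hsum0
  · rintro ⟨-, hi, hii⟩
    refine ⟨?_, hSlast⟩
    intro M hM1 hM2
    set t := _root_.star q (k * M) with htdef
    have ht1 : 1 ≤ t := star_pos (by omega) (by positivity)
    have ht2 : t ≤ q - 2 := star_le_sub_two hq3 hgcdk hM1 hM2
    have hback : _root_.star q (k' * t) = M := star_star_inv hq3 hk1 hk'1 hk'k hM1 hM2
    have hid := ident hF hq3 hneven hk1 hgcdk hk'1 hcopk' hk'k hkk' hM1 hM2
    rcases le_or_gt t ((q - 1) / 2) with hle | hgt
    · have hz := hi t ht1 hle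
      rw [hiff (fun i => (_root_.star q (k' * t)).choose (_root_.star q (k' * i)))
        (fun i => i.choose (2 * t))] at hz
      rw [hback] at hz
      have h2t : _root_.star q (2 * t) = 2 * t := star_eq_self (by omega) (by omega)
      rw [h2t] at hid
      rw [hid, hz, mul_zero]
    · set s := t - (q - 1) / 2 with hsdef
      have hs1 : 1 ≤ s := by omega
      have hs2 : s < (q - 1) / 2 := by omega
      have hz := hii s hs1 hs2
      rw [show s + (q - 1) / 2 = t by omega] at hz
      rw [hiff (fun i => (_root_.star q (k' * t)).choose (_root_.star q (k' * i)))
        (fun i => i.choose (2 * s))] at hz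
      rw [hback] at hz
      have h2t : _root_.star q (2 * t) = 2 * s := by
        have hcg : 2 * t ≡ 2 * s [MOD q - 1] := by
          show (2 * t) % (q - 1) = (2 * s) % (q - 1)
          rw [show 2 * t = 2 * s + (q - 1) by omega, Nat.add_mod_right]
        rw [star_congr hcg (by positivity) (by omega), star_eq_self (by omega) (by omega)]
      rw [h2t] at hid
      rw [hid, hz, mul_zero]
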